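/- Let b : ℤ → ℂ be a zero-mean second-order stationary random sequence with auto-covariance m[k] = E[b[k+l] b[l]*] and complementary auto-covariance m̃[k] = E[b[k+l] b[l]], both absolutely summable, and let M(f), M̃(f) denote their discrete-time Fourier transforms. Then |M̃(f)|² ≤ M(f) M(-f) for all f. -/

import Mathlib

open Complex Real MeasureTheory Filter Finset Topology

/-! Auxiliary combinatorial/analytic lemmas -/

lemma count_lemma (N : ℕ) (j : ℤ) :
    (((Finset.range N) ×ˢ (Finset.range N)).filter
      (fun p : ℕ × ℕ => (p.1 : ℤ) - (p.2 : ℤ) = j)).card = N - j.natAbs := by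
  rw [← Finset.card_range (N - j.natAbs)]
  apply Finset.card_bij' (fun p _ => min p.1 p.2)
    (fun i _ => (i + j.toNat, i + (-j).toNat))
  · intro p hp
    simp only [Finset.mem_filter, Finset.mem_product, Finset.mem_range] at hp ⊢
    omega
  · intro i hi
    simp only [Finset.mem_filter, Finset.mem_product, Finset.mem_range] at hi ⊢
    omega
  · intro p hp
    simp only [Finset.mem_filter, Finset.mem_product, Finset.mem_range] at hp
    ext <;> simp <;> omega
  · intro i hi
    simp only [Finset.mem_range] at hi
    omega

lemma double_sum_eq (a : ℤ → ℂ) (N : ℕ) :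
    ∑ k ∈ Finset.range N, ∑ l ∈ Finset.range N, a ((k : ℤ) - l)
      = ∑ j ∈ Finset.Icc (-(N : ℤ)) N, ((N - j.natAbs : ℕ) : ℂ) * a j := by
  rw [← Finset.sum_product']
  rw [← Finset.sum_fiberwise_of_maps_to (s := Finset.range N ×ˢ Finset.range N)
    (g := fun p : ℕ × ℕ => (p.1 : ℤ) - p.2) (t := Finset.Icc (-(N : ℤ)) N)
    (fun p hp => by
      simp only [Finset.mem_product, Finset.mem_range] at hp
      simp only [Finset.mem_Icc]; omega)
    (fun p : ℕ × ℕ => a ((p.1 : ℤ) - p.2))]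
  refine Finset.sum_congr rfl fun j hj => ?_
  have hc : ∀ p ∈ (Finset.range N ×ˢ Finset.range N).filter
      (fun p : ℕ × ℕ => (p.1 : ℤ) - p.2 = j), a ((p.1 : ℤ) - p.2) = a j := by
    intro p hp
    simp only [Finset.mem_filter] at hp
    rw [hp.2]
  rw [Finset.sum_congr rfl hc, Finset.sum_const, count_lemma, nsmul_eq_mul]

lemma cesaro (a : ℤ → ℂ) (ha : Summable fun j => ‖a j‖) :
    Tendsto (fun N : ℕ => (N : ℂ)⁻¹ * ∑ k ∈ Finset.range N, ∑ l ∈ Finset.range N, a ((k : ℤ) - l))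
      atTop (𝓝 (∑' j, a j)) := by
  have key : ∀ N : ℕ, (N : ℂ)⁻¹ * ∑ k ∈ Finset.range N, ∑ l ∈ Finset.range N, a ((k : ℤ) - l)
      = ∑' j : ℤ, ((((N - j.natAbs : ℕ) : ℝ) / N : ℝ) : ℂ) * a j := by
    intro N
    rw [double_sum_eq]
    rw [tsum_eq_sum (s := Finset.Icc (-(N : ℤ)) N) (f := fun j : ℤ =>
        ((((N - j.natAbs : ℕ) : ℝ) / N : ℝ) : ℂ) * a j) (fun j hj => by
      simp only [Finset.mem_Icc, not_and, not_le] at hj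
      have : N - j.natAbs = 0 := by omega
      simp [this])]
    rw [Finset.mul_sum]
    refine Finset.sum_congr rfl fun j hj => ?_
    push_cast
    ring
  simp only [key]
  apply tendsto_tsum_of_dominated_convergence (bound := fun j => ‖a j‖) ha
  · intro j
    have h1 : Tendsto (fun N : ℕ => (((N - j.natAbs : ℕ) : ℝ) / N : ℝ)) atTop (𝓝 1) := by
      have h2 : Tendsto (fun N : ℕ => 1 - (j.natAbs : ℝ) / N) atTop (𝓝 1) := by
        have := tendsto_const_div_atTop_nhds_zero_nat (j.natAbs : ℝ)
        simpa using (tendsto_const_nhds (x := (1:ℝ))).sub this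
      apply Tendsto.congr' _ h2
      filter_upwards [eventually_ge_atTop (j.natAbs + 1)] with N hN
      have hN0 : (0:ℝ) < N := by exact_mod_cast (by omega : 0 < N)
      rw [Nat.cast_sub (by omega : j.natAbs ≤ N)]
      field_simp
    have := ((Complex.continuous_ofReal.tendsto 1).comp h1).mul_const (a j)
    simpa using this
  · filter_upwards with N j
    rw [norm_mul]
    have hle : ‖((((N - j.natAbs : ℕ) : ℝ) / N : ℝ) : ℂ)‖ ≤ 1 := by
      rw [Complex.norm_real, Real.norm_eq_abs, _root_.abs_of_nonneg (by positivity)]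
      rcases Nat.eq_zero_or_pos N with h | h
      · simp [h]
      · rw [div_le_one (by exact_mod_cast h)]
        exact_mod_cast Nat.sub_le N j.natAbs
    calc ‖((((N - j.natAbs : ℕ) : ℝ) / N : ℝ) : ℂ)‖ * ‖a j‖ ≤ 1 * ‖a j‖ :=
          mul_le_mul_of_nonneg_right hle (norm_nonneg _)
      _ = ‖a j‖ := one_mul _

/-! The complex exponential kernel -/

noncomputable def E (g : ℝ) (k : ℤ) : ℂ :=
  Complex.exp (-2 * (π : ℂ) * Complex.I * (g : ℂ) * (k : ℂ))

lemma E_mul (g : ℝ) (k l : ℤ) : E g k * E (-g) l = E g (k - l) := by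
  unfold E
  rw [← Complex.exp_add]
  congr 1
  push_cast
  ring

lemma E_conj (g : ℝ) (k : ℤ) : (starRingEnd ℂ) (E g k) = E (-g) k := by
  unfold E
  rw [← Complex.exp_conj]
  congr 1
  simp only [map_mul, map_neg, map_ofNat, Complex.conj_I, Complex.conj_ofReal, map_intCast]
  push_cast
  ring

lemma E_norm (g : ℝ) (k : ℤ) : ‖E g k‖ = 1 := by
  have h : E g k = Complex.exp (((-2 * π * g * k : ℝ) : ℂ) * Complex.I) := by
    unfold E; congr 1; push_cast; ring
  rw [h, Complex.norm_exp_ofReal_mul_I]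

lemma key_integral {Ω : Type*} [MeasurableSpace Ω] (μ : Measure Ω)
    (b v : ℤ → Ω → ℂ) (c : ℤ → ℂ) (g : ℝ)
    (hvint : ∀ p l : ℤ, Integrable (fun ω => b p ω * v l ω) μ)
    (hvc : ∀ k l : ℤ, ∫ ω, b k ω * v l ω ∂μ = c (k - l)) (N : ℕ) :
    ∫ ω, (∑ k ∈ Finset.range N, b k ω * E g k) * (∑ l ∈ Finset.range N, v l ω * E (-g) l) ∂μ
      = ∑ k ∈ Finset.range N, ∑ l ∈ Finset.range N, c ((k : ℤ) - l) * E g ((k : ℤ) - l) := by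
  have h1 : ∀ ω : Ω, (∑ k ∈ Finset.range N, b k ω * E g k)
        * (∑ l ∈ Finset.range N, v l ω * E (-g) l)
      = ∑ k ∈ Finset.range N, ∑ l ∈ Finset.range N, (E g k * E (-g) l) * (b k ω * v l ω) := by
    intro ω
    rw [Finset.sum_mul_sum]
    exact Finset.sum_congr rfl fun k _ => Finset.sum_congr rfl fun l _ => by ring
  simp only [h1]
  rw [integral_finset_sum (Finset.range N)
    (f := fun (k : ℕ) (ω : Ω) => ∑ l ∈ Finset.range N, E g k * E (-g) l * (b k ω * v l ω))
    (fun k _ => integrable_finset_sum _ (fun l _ => ((hvint k l).const_mul _)))]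
  refine Finset.sum_congr rfl fun k _ => ?_
  rw [integral_finset_sum (Finset.range N)
    (f := fun (l : ℕ) (ω : Ω) => E g k * E (-g) l * (b k ω * v l ω))
    (fun l _ => ((hvint k l).const_mul _))]
  refine Finset.sum_congr rfl fun l _ => ?_
  rw [integral_const_mul, hvc, E_mul]
  ring
theorem stmt_1 {Ω : Type*} [MeasurableSpace Ω] (μ : Measure Ω) [IsProbabilityMeasure μ]
    (b : ℤ → Ω → ℂ) (m mt : ℤ → ℂ)
    (hmeas : ∀ k, AEStronglyMeasurable (b k) μ)
    (hint : ∀ k l : ℤ, Integrable (fun ω => b (k + l) ω * (starRingEnd ℂ) (b l ω)) μ)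
    (hint' : ∀ k l : ℤ, Integrable (fun ω => b (k + l) ω * b l ω) μ)
    (hmean : ∀ k : ℤ, ∫ ω, b k ω ∂μ = 0)
    (hm : ∀ k l : ℤ, ∫ ω, b (k + l) ω * (starRingEnd ℂ) (b l ω) ∂μ = m k)
    (hmt : ∀ k l : ℤ, ∫ ω, b (k + l) ω * b l ω ∂μ = mt k)
    (hsm : Summable fun k : ℤ => ‖m k‖) (hsmt : Summable fun k : ℤ => ‖mt k‖)
    (M Mt : ℝ → ℂ)
    (hM : ∀ f : ℝ, M f = ∑' k : ℤ, m k * Complex.exp (-2 * (π : ℂ) * Complex.I * (f : ℂ) * (k : ℂ)))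
    (hMt : ∀ f : ℝ, Mt f = ∑' k : ℤ, mt k * Complex.exp (-2 * (π : ℂ) * Complex.I * (f : ℂ) * (k : ℂ)))
    (f : ℝ) :
    ‖Mt f‖ ^ 2 ≤ (M f).re * (M (-f)).re := by
  -- generalized integrability and covariance identities
  have hint1 : ∀ p l : ℤ, Integrable (fun ω => b p ω * (starRingEnd ℂ) (b l ω)) μ := fun p l => by
    have := hint (p - l) l; rwa [sub_add_cancel] at this
  have hint2 : ∀ p l : ℤ, Integrable (fun ω => b p ω * b l ω) μ := fun p l => by
    have := hint' (p - l) l; rwa [sub_add_cancel] at this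
  have hm1 : ∀ k l : ℤ, ∫ ω, b k ω * (starRingEnd ℂ) (b l ω) ∂μ = m (k - l) := fun k l => by
    have := hm (k - l) l; rwa [sub_add_cancel] at this
  have hmt1 : ∀ k l : ℤ, ∫ ω, b k ω * b l ω ∂μ = mt (k - l) := fun k l => by
    have := hmt (k - l) l; rwa [sub_add_cancel] at this
  -- each b k is in L²
  have hb2 : ∀ k : ℤ, MemLp (b k) 2 μ := by
    intro k
    refine (memLp_two_iff_integrable_sq_norm (hmeas k)).2 ?_
    have h := (hint1 k k).norm
    refine h.congr (Filter.Eventually.of_forall fun ω => ?_)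
    simp only [norm_mul, RCLike.norm_conj, sq]
  -- the partial "DFT" processes
  set X : ℝ → ℕ → Ω → ℂ := fun g N ω => ∑ k ∈ Finset.range N, b k ω * E g k with hXdef
  have hXmem : ∀ (g : ℝ) (N : ℕ), MemLp (X g N) 2 μ := by
    intro g N
    simp only [hXdef]
    apply memLp_finsetSum
    intro k _
    have h := (hb2 (k : ℤ)).const_mul (E g k)
    have heq : (fun x => E g k * b k x) = fun a => b (k : ℤ) a * E g k := by
      funext x; ring
    rwa [heq] at h
  -- covariance double sums
  set A : ℝ → ℕ → ℂ := fun g N =>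
    ∑ k ∈ Finset.range N, ∑ l ∈ Finset.range N, m ((k : ℤ) - l) * E g ((k : ℤ) - l) with hAdef
  set B : ℕ → ℂ := fun N =>
    ∑ k ∈ Finset.range N, ∑ l ∈ Finset.range N, mt ((k : ℤ) - l) * E f ((k : ℤ) - l) with hBdef
  have hA : ∀ (g : ℝ) (N : ℕ), ∫ ω, X g N ω * (starRingEnd ℂ) (X g N ω) ∂μ = A g N := by
    intro g N
    have hk := key_integral μ b (fun l ω => (starRingEnd ℂ) (b l ω)) m g hint1 hm1 N
    have heq : (fun ω => X g N ω * (starRingEnd ℂ) (X g N ω))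
        = fun ω => (∑ k ∈ Finset.range N, b k ω * E g k)
            * (∑ l ∈ Finset.range N, (starRingEnd ℂ) (b l ω) * E (-g) l) := by
      funext ω
      simp only [hXdef, map_sum, map_mul, E_conj]
    simp only [hAdef]
    rw [heq, hk]
  have hB : ∀ N : ℕ, ∫ ω, X f N ω * X (-f) N ω ∂μ = B N := by
    intro N
    have hk := key_integral μ b b mt f hint2 hmt1 N
    simp only [hBdef, hXdef]
    exact hk
  -- A is the (real, nonnegative) second moment
  have hA2 : ∀ (g : ℝ) (N : ℕ), A g N = ((∫ ω, ‖X g N ω‖ ^ 2 ∂μ : ℝ) : ℂ) := by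
    intro g N
    rw [← hA g N]
    have heq : (fun ω => X g N ω * (starRingEnd ℂ) (X g N ω))
        = fun ω => ((‖X g N ω‖ ^ 2 : ℝ) : ℂ) := by
      funext ω
      rw [Complex.mul_conj, Complex.normSq_eq_norm_sq]
    rw [heq]
    exact integral_ofReal
  -- Cauchy-Schwarz per N
  have hCS : ∀ N : ℕ, ‖B N‖ ^ 2 ≤ (A f N).re * (A (-f) N).re := by
    intro N
    have hXf := hXmem f N
    have hXg := hXmem (-f) N
    have h2 : (ENNReal.ofReal (2:ℝ)) = 2 := by
      rw [ENNReal.ofReal_ofNat]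
    have hpq : Real.HolderConjugate 2 2 := Real.HolderConjugate.two_two
    have hH := integral_mul_le_Lp_mul_Lq_of_nonneg (μ := μ) hpq
      (f := fun ω => ‖X f N ω‖) (g := fun ω => ‖X (-f) N ω‖)
      (Filter.Eventually.of_forall fun ω => norm_nonneg _)
      (Filter.Eventually.of_forall fun ω => norm_nonneg _)
      (by rw [h2]; exact hXf.norm) (by rw [h2]; exact hXg.norm)
    have hrw : ∀ (g : ℝ), (∫ ω, ‖X g N ω‖ ^ (2:ℝ) ∂μ) = ∫ ω, ‖X g N ω‖ ^ 2 ∂μ := by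
      intro g
      refine integral_congr_ae (Filter.Eventually.of_forall fun ω => ?_)
      simp only []
      rw [← Real.rpow_natCast ‖X g N ω‖ 2]
      norm_num
    rw [hrw, hrw] at hH
    have hnormB : ‖B N‖ ≤ ∫ ω, ‖X f N ω‖ * ‖X (-f) N ω‖ ∂μ := by
      rw [← hB N]
      refine le_trans (norm_integral_le_integral_norm _) ?_
      refine le_of_eq (integral_congr_ae (Filter.Eventually.of_forall fun ω => ?_))
      simp only [norm_mul]
    set a1 : ℝ := ∫ ω, ‖X f N ω‖ ^ 2 ∂μ with ha1
    set a2 : ℝ := ∫ ω, ‖X (-f) N ω‖ ^ 2 ∂μ with ha2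
    have ha1n : 0 ≤ a1 := integral_nonneg fun ω => by positivity
    have ha2n : 0 ≤ a2 := integral_nonneg fun ω => by positivity
    have hBle : ‖B N‖ ≤ a1 ^ ((1:ℝ)/2) * a2 ^ ((1:ℝ)/2) := le_trans hnormB hH
    have hre1 : (A f N).re = a1 := by rw [hA2 f N, Complex.ofReal_re]
    have hre2 : (A (-f) N).re = a2 := by rw [hA2 (-f) N, Complex.ofReal_re]
    rw [hre1, hre2]
    calc ‖B N‖ ^ 2 ≤ (a1 ^ ((1:ℝ)/2) * a2 ^ ((1:ℝ)/2)) ^ 2 := by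
          apply pow_le_pow_left₀ (norm_nonneg _) hBle
      _ = a1 * a2 := by
          rw [mul_pow, ← Real.rpow_natCast (a1 ^ ((1:ℝ)/2)) 2,
            ← Real.rpow_natCast (a2 ^ ((1:ℝ)/2)) 2,
            ← Real.rpow_mul ha1n, ← Real.rpow_mul ha2n]
          norm_num
  -- limits
  have hMlim : Tendsto (fun N : ℕ => (N : ℂ)⁻¹ * A f N) atTop (𝓝 (M f)) := by
    have hs : Summable fun j : ℤ => ‖m j * E f j‖ := by
      refine hsm.congr fun j => ?_
      rw [norm_mul, E_norm, mul_one]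
    have hc := cesaro (fun j => m j * E f j) hs
    simp only [hAdef]
    convert hc using 2
    rw [hM f]
    rfl
  have hMlim' : Tendsto (fun N : ℕ => (N : ℂ)⁻¹ * A (-f) N) atTop (𝓝 (M (-f))) := by
    have hs : Summable fun j : ℤ => ‖m j * E (-f) j‖ := by
      refine hsm.congr fun j => ?_
      rw [norm_mul, E_norm, mul_one]
    have hc := cesaro (fun j => m j * E (-f) j) hs
    simp only [hAdef]
    convert hc using 2
    rw [hM (-f)]
    rfl
  have hMtlim : Tendsto (fun N : ℕ => (N : ℂ)⁻¹ * B N) atTop (𝓝 (Mt f)) := by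
    have hs : Summable fun j : ℤ => ‖mt j * E f j‖ := by
      refine hsmt.congr fun j => ?_
      rw [norm_mul, E_norm, mul_one]
    have hc := cesaro (fun j => mt j * E f j) hs
    simp only [hBdef]
    convert hc using 2
    rw [hMt f]
    rfl
  -- pass to the limit
  have hL : Tendsto (fun N : ℕ => ‖(N : ℂ)⁻¹ * B N‖ ^ 2) atTop (𝓝 (‖Mt f‖ ^ 2)) :=
    (hMtlim.norm).pow 2
  have hR : Tendsto (fun N : ℕ => ((N : ℂ)⁻¹ * A f N).re * ((N : ℂ)⁻¹ * A (-f) N).re) atTop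
      (𝓝 ((M f).re * (M (-f)).re)) :=
    ((Complex.continuous_re.tendsto _).comp hMlim).mul
      ((Complex.continuous_re.tendsto _).comp hMlim')
  refine le_of_tendsto_of_tendsto' hL hR fun N => ?_
  have hNinv : ((N : ℂ))⁻¹ = (((N : ℝ)⁻¹ : ℝ) : ℂ) := by push_cast; rfl
  have hre : ∀ z : ℂ, ((N : ℂ)⁻¹ * z).re = (N : ℝ)⁻¹ * z.re := by
    intro z
    rw [hNinv, Complex.re_ofReal_mul]
  rw [hre, hre]
  have hnorm : ‖(N : ℂ)⁻¹ * B N‖ ^ 2 = ((N : ℝ)⁻¹) ^ 2 * ‖B N‖ ^ 2 := by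
    rw [norm_mul, mul_pow, hNinv, Complex.norm_real, Real.norm_eq_abs,
      _root_.abs_of_nonneg (by positivity)]
  rw [hnorm]
  have h := hCS N
  have hn : (0:ℝ) ≤ (N : ℝ)⁻¹ := by positivity
  nlinarith [mul_le_mul_of_nonneg_left h (sq_nonneg ((N:ℝ)⁻¹)), sq_nonneg ((N:ℝ)⁻¹)]
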